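/- Let E ∈ K^{m×σ}, M ∈ K^{σ×σ}, s ∈ ℕ^m. For any s-minimal interpolation basis P ∈ K[X]^{m×m} for (E,M), the sum of the s-row degrees of P is at most σ + (s_1 + ⋯ + s_m). -/

import Mathlib

open Polynomial Matrix

/-- The `s`-row degree of row `i` of `P`. -/
noncomputable def rowDegW {K : Type*} [Field K] {k m : ℕ} (s : Fin m → ℕ)
    (P : Matrix (Fin k) (Fin m) (Polynomial K)) (i : Fin k) : WithBot ℕ :=
  Finset.univ.sup fun j => (P i j).degree + (s j : WithBot ℕ)

/-- The `s`-leading matrix of `P`. -/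
noncomputable def leadMat {K : Type*} [Field K] {k m : ℕ} (s : Fin m → ℕ)
    (P : Matrix (Fin k) (Fin m) (Polynomial K)) : Matrix (Fin k) (Fin m) K :=
  fun i j =>
    if (P i j).degree + (s j : WithBot ℕ) = rowDegW s P i then (P i j).leadingCoeff else 0

/-- `P` is `s`-reduced. -/
def IsReducedS {K : Type*} [Field K] {k m : ℕ} (s : Fin m → ℕ)
    (P : Matrix (Fin k) (Fin m) (Polynomial K)) : Prop :=
  (leadMat s P).rank = k

/-- `p` is an interpolant for `(E,M)`. -/
def IsInterpolant {K : Type*} [Field K] {m σ : ℕ} (E : Matrix (Fin m) (Fin σ) K)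
    (M : Matrix (Fin σ) (Fin σ) K) (p : Fin m → Polynomial K) : Prop :=
  ∑ c, Matrix.vecMul (E c) (Polynomial.aeval M (p c)) = 0

/-- The rows of `P` form a basis of the `K[X]`-module of interpolants for `(E,M)`. -/
def IsInterpBasis {K : Type*} [Field K] {m σ : ℕ} (E : Matrix (Fin m) (Fin σ) K)
    (M : Matrix (Fin σ) (Fin σ) K) (P : Matrix (Fin m) (Fin m) (Polynomial K)) : Prop :=
  LinearIndependent (Polynomial K) (fun i => P i) ∧
    ∀ q : Fin m → Polynomial K,
      IsInterpolant E M q ↔ q ∈ Submodule.span (Polynomial K) (Set.range fun i => P i)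

lemma leadMat_rows_li {K : Type*} [Field K] {m : ℕ} (s : Fin m → ℕ)
    (P : Matrix (Fin m) (Fin m) (Polynomial K)) (hred : IsReducedS s P) :
    LinearIndependent K (fun i => leadMat s P i) := by
  rw [linearIndependent_iff_card_eq_finrank_span, Fintype.card_fin, Set.finrank]
  rw [IsReducedS, Matrix.rank_eq_finrank_span_row] at hred
  exact hred.symm

/-- Predictable degree property. -/
lemma pred_deg {K : Type*} [Field K] {m : ℕ} (s : Fin m → ℕ)
    (P : Matrix (Fin m) (Fin m) (Polynomial K)) (hred : IsReducedS s P)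
    (d : Fin m → ℕ) (hd : ∀ i, rowDegW s P i = (d i : WithBot ℕ))
    (lam : Fin m → Polynomial K) (t : ℕ)
    (hq : ∀ j, (∑ i, lam i * P i j).degree + (s j : WithBot ℕ) ≤ (t : WithBot ℕ)) :
    ∀ i, (lam i).degree + (d i : WithBot ℕ) ≤ (t : WithBot ℕ) := by
  by_contra hcon
  push_neg at hcon
  obtain ⟨i₀, hi₀⟩ := hcon
  haveI : Nonempty (Fin m) := ⟨i₀⟩
  obtain ⟨i₁, -, hsup⟩ := Finset.exists_mem_eq_sup Finset.univ
    Finset.univ_nonempty (fun i => (lam i).degree + (d i : WithBot ℕ))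
  set D : WithBot ℕ := (lam i₁).degree + (d i₁ : WithBot ℕ) with hDdef
  have hDsup : ∀ i, (lam i).degree + (d i : WithBot ℕ) ≤ D :=
    fun i => le_of_le_of_eq (Finset.le_sup (f := fun i => (lam i).degree + (d i : WithBot ℕ))
      (Finset.mem_univ i)) hsup
  have hDge : (t : WithBot ℕ) < D := lt_of_lt_of_le hi₀ (hDsup i₀)
  have hlam₁ : lam i₁ ≠ 0 := by
    intro h
    rw [hDdef, h, degree_zero, WithBot.bot_add] at hDge
    exact absurd hDge (by simp)
  obtain ⟨D', hD'⟩ : ∃ D' : ℕ, D = (D' : WithBot ℕ) :=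
    ⟨(lam i₁).natDegree + d i₁, by rw [hDdef, degree_eq_natDegree hlam₁]; push_cast; rfl⟩
  have htD' : t < D' := by rw [hD'] at hDge; exact_mod_cast hDge
  -- the leading coefficient vector
  set v : Fin m → K := fun i =>
    if (lam i).degree + (d i : WithBot ℕ) = D then (lam i).leadingCoeff else 0 with hv
  have hvdef : ∀ i, v i =
      if (lam i).degree + (d i : WithBot ℕ) = D then (lam i).leadingCoeff else 0 :=
    fun i => rfl
  have hLdef : ∀ i j, leadMat s P i j =
      if (P i j).degree + (s j : WithBot ℕ) = (d i : WithBot ℕ)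
      then (P i j).leadingCoeff else 0 := by
    intro i j
    rw [leadMat, hd i]
  have hvne : v ≠ 0 := by
    intro h
    have h1 : v i₁ = 0 := by rw [h]; rfl
    rw [hvdef i₁, if_pos hDdef.symm] at h1
    exact hlam₁ (leadingCoeff_eq_zero.mp h1)
  have hli := leadMat_rows_li s P hred
  rw [Fintype.linearIndependent_iff] at hli
  obtain ⟨j, hj⟩ : ∃ j, ∑ i, v i * leadMat s P i j ≠ 0 := by
    by_contra h
    push_neg at h
    refine hvne (funext fun i => hli v ?_ i)
    funext j
    simpa using h j
  obtain ⟨i₂, -, hi₂⟩ := Finset.exists_ne_zero_of_sum_ne_zero hj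
  have hvi₂ : v i₂ ≠ 0 := fun h => hi₂ (by rw [h, zero_mul])
  have hLi₂ : leadMat s P i₂ j ≠ 0 := fun h => hi₂ (by rw [h, mul_zero])
  have hlam₂ : lam i₂ ≠ 0 := by
    intro h
    apply hvi₂
    rw [hvdef i₂, if_neg]
    rw [h, degree_zero, WithBot.bot_add, hD']
    simp
  have hP₂ : P i₂ j ≠ 0 := by
    intro h
    apply hLi₂
    rw [hLdef i₂ j, h]
    simp
  have hdeg₂ : (P i₂ j).degree + (s j : WithBot ℕ) = (d i₂ : WithBot ℕ) := by
    by_contra h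
    exact hLi₂ (by rw [hLdef i₂ j, if_neg h])
  have hvd₂ : (lam i₂).degree + (d i₂ : WithBot ℕ) = D := by
    by_contra h
    exact hvi₂ (by rw [hvdef i₂, if_neg h])
  have hsjD' : s j ≤ D' := by
    have h1' : (P i₂ j).natDegree + s j = d i₂ := by
      have := hdeg₂
      rw [degree_eq_natDegree hP₂] at this
      exact_mod_cast this
    have h2' : (lam i₂).natDegree + d i₂ = D' := by
      have := hvd₂
      rw [degree_eq_natDegree hlam₂, hD'] at this
      exact_mod_cast this
    omega
  -- coefficient computation
  have hcoeff : ∀ i, (lam i * P i j).coeff (D' - s j) = v i * leadMat s P i j := by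
    intro i
    by_cases hl : lam i = 0
    · have h0 : v i = 0 := by
        rw [hvdef i, if_neg]
        rw [hl, degree_zero, WithBot.bot_add, hD']
        simp
      simp [hl, h0]
    by_cases hp : P i j = 0
    · have h0 : leadMat s P i j = 0 := by rw [hLdef i j, hp]; simp
      simp [hp, h0]
    have ha : (lam i).natDegree + d i ≤ D' := by
      have h := hDsup i
      rw [degree_eq_natDegree hl, hD'] at h
      exact_mod_cast h
    have hb : (P i j).natDegree + s j ≤ d i := by
      have h : (P i j).degree + (s j : WithBot ℕ) ≤ (d i : WithBot ℕ) := by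
        rw [← hd i, rowDegW]
        exact Finset.le_sup (f := fun j => (P i j).degree + (s j : WithBot ℕ))
          (Finset.mem_univ j)
      rw [degree_eq_natDegree hp] at h
      exact_mod_cast h
    by_cases hcase : (lam i).natDegree + d i = D' ∧ (P i j).natDegree + s j = d i
    · obtain ⟨h1, h2⟩ := hcase
      have hab : D' - s j = (lam i).natDegree + (P i j).natDegree := by omega
      rw [hab, coeff_mul_degree_add_degree]
      have hv1 : v i = (lam i).leadingCoeff := by
        rw [hvdef i, if_pos]
        rw [degree_eq_natDegree hl, hD']
        exact_mod_cast h1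
      have hv2 : leadMat s P i j = (P i j).leadingCoeff := by
        rw [hLdef i j, if_pos]
        rw [degree_eq_natDegree hp]
        exact_mod_cast h2
      rw [hv1, hv2]
    · have hzero : v i * leadMat s P i j = 0 := by
        rcases not_and_or.mp hcase with h | h
        · have h0 : v i = 0 := by
            rw [hvdef i, if_neg]
            rw [degree_eq_natDegree hl, hD']
            exact_mod_cast fun hh => h (by exact_mod_cast hh)
          rw [h0, zero_mul]
        · have h0 : leadMat s P i j = 0 := by
            rw [hLdef i j, if_neg]
            rw [degree_eq_natDegree hp]
            exact_mod_cast fun hh => h (by exact_mod_cast hh)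
          rw [h0, mul_zero]
      rw [hzero]
      apply coeff_eq_zero_of_natDegree_lt
      calc (lam i * P i j).natDegree ≤ (lam i).natDegree + (P i j).natDegree :=
            natDegree_mul_le
        _ < D' - s j := by
            rcases not_and_or.mp hcase with h | h <;> omega
  have hcoef : (∑ i, lam i * P i j).coeff (D' - s j) ≠ 0 := by
    rw [finset_sum_coeff, Finset.sum_congr rfl (fun i _ => hcoeff i)]
    exact hj
  have hdge : ((D' - s j : ℕ) : WithBot ℕ) ≤ (∑ i, lam i * P i j).degree :=
    le_degree_of_ne_zero hcoef
  have hfin : (D' : WithBot ℕ) ≤ (t : WithBot ℕ) := by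
    calc (D' : WithBot ℕ) = ((D' - s j : ℕ) : WithBot ℕ) + (s j : WithBot ℕ) := by
          rw [← Nat.cast_add]
          exact_mod_cast (by omega : D' = D' - s j + s j)
      _ ≤ (∑ i, lam i * P i j).degree + (s j : WithBot ℕ) := add_le_add hdge le_rfl
      _ ≤ (t : WithBot ℕ) := hq j
  have : D' ≤ t := by exact_mod_cast hfin
  omega

/-- for any `s`-minimal interpolation basis `P` for `(E,M)`, the sum of
the `s`-row degrees of `P` is at most `σ + (s_1 + ⋯ + s_m)`. -/
theorem sum_rowDeg_minimal_interpolation_basis_le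
    {K : Type*} [Field K] {m σ : ℕ}
    (E : Matrix (Fin m) (Fin σ) K) (M : Matrix (Fin σ) (Fin σ) K) (s : Fin m → ℕ)
    (P : Matrix (Fin m) (Fin m) (Polynomial K))
    (hbasis : IsInterpBasis E M P) (hred : IsReducedS s P) :
    ∑ i, rowDegW s P i ≤ ((σ + ∑ j, s j : ℕ) : WithBot ℕ) := by
  obtain ⟨hli, hspan⟩ := hbasis
  -- each row is nonzero, so each row degree is a natural number
  have hrow : ∀ i, P i ≠ 0 := fun i => hli.ne_zero i
  have hdnat : ∀ i, ∃ di : ℕ, rowDegW s P i = (di : WithBot ℕ) := by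
    intro i
    have : ∃ j, P i j ≠ 0 := by
      by_contra h
      push_neg at h
      exact hrow i (funext h)
    obtain ⟨j, hj⟩ := this
    have hle : (((P i j).natDegree + s j : ℕ) : WithBot ℕ) ≤ rowDegW s P i := by
      rw [rowDegW]
      have := Finset.le_sup (f := fun j => (P i j).degree + (s j : WithBot ℕ))
        (Finset.mem_univ j)
      rw [degree_eq_natDegree hj] at this
      exact_mod_cast this
    have hbot : rowDegW s P i ≠ ⊥ := fun h => by
      rw [h] at hle
      exact absurd hle (by simp)
    obtain ⟨n, hn⟩ := WithBot.ne_bot_iff_exists.mp hbot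
    exact ⟨n, hn.symm⟩
  choose d hd using hdnat
  -- bound on entries
  have hds : ∀ i j, (P i j).degree + (s j : WithBot ℕ) ≤ (d i : WithBot ℕ) := by
    intro i j
    rw [← hd i, rowDegW]
    exact Finset.le_sup (f := fun j => (P i j).degree + (s j : WithBot ℕ))
      (Finset.mem_univ j)
  -- choose a large t
  set t : ℕ := (∑ i, d i) + (∑ j, s j) with ht
  have hdt : ∀ i, d i ≤ t := fun i => le_add_right
    (Finset.single_le_sum (f := d) (fun _ _ => Nat.zero_le _) (Finset.mem_univ i))
  have hst : ∀ j, s j ≤ t := fun j => le_trans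
    (Finset.single_le_sum (f := s) (fun _ _ => Nat.zero_le _) (Finset.mem_univ j))
    (Nat.le_add_left _ _)
  -- the finite-dimensional spaces
  haveI : ∀ n : ℕ, FiniteDimensional K (degreeLT K n) :=
    fun n => (Polynomial.degreeLTEquiv K _).symm.finiteDimensional
  -- the multiplication map α : B → A
  have hmemA : ∀ (lam : Π i : Fin m, degreeLT K (t + 1 - d i)) (j : Fin m),
      (∑ i, (lam i : Polynomial K) * P i j) ∈ degreeLT K (t + 1 - s j) := by
    intro lam j
    rw [mem_degreeLT]
    refine lt_of_le_of_lt (degree_sum_le _ _) ?_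
    rw [Finset.sup_lt_iff (by exact WithBot.bot_lt_coe _)]
    intro i _
    by_cases hl : (lam i : Polynomial K) = 0
    · rw [hl, zero_mul, degree_zero]
      exact WithBot.bot_lt_coe _
    by_cases hp : P i j = 0
    · rw [hp, mul_zero, degree_zero]
      exact WithBot.bot_lt_coe _
    have h1 : (lam i : Polynomial K).natDegree < t + 1 - d i := by
      have := (lam i).2
      rw [mem_degreeLT, degree_eq_natDegree hl] at this
      exact_mod_cast this
    have h2 : (P i j).natDegree + s j ≤ d i := by
      have := hds i j
      rw [degree_eq_natDegree hp] at this
      exact_mod_cast this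
    rw [degree_mul, degree_eq_natDegree hl, degree_eq_natDegree hp, ← Nat.cast_add]
    exact_mod_cast (by omega :
      (lam i : Polynomial K).natDegree + (P i j).natDegree < t + 1 - s j)
  let α : (Π i : Fin m, degreeLT K (t + 1 - d i)) →ₗ[K]
      (Π j : Fin m, degreeLT K (t + 1 - s j)) :=
    { toFun := fun lam j => ⟨∑ i, (lam i : Polynomial K) * P i j, hmemA lam j⟩
      map_add' := by
        intro x y
        funext j
        apply Subtype.ext
        simp [add_mul, Finset.sum_add_distrib]
      map_smul' := by
        intro c x
        funext j
        apply Subtype.ext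
        simp [Finset.smul_sum, smul_mul_assoc] }
  -- the evaluation map β : A → K^σ
  let β : (Π j : Fin m, degreeLT K (t + 1 - s j)) →ₗ[K] (Fin σ → K) :=
    { toFun := fun q => ∑ c, Matrix.vecMul (E c) (Polynomial.aeval M ((q c : Polynomial K)))
      map_add' := by
        intro x y
        simp [map_add, Matrix.vecMul_add, Finset.sum_add_distrib]
      map_smul' := by
        intro c x
        funext u
        simp only [Pi.smul_apply, RingHom.id_apply, Finset.sum_apply, Finset.smul_sum]
        refine Finset.sum_congr rfl fun w _ => ?_
        rw [SetLike.val_smul, _root_.map_smul]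
        simp [Matrix.vecMul, dotProduct, Matrix.smul_apply, Finset.mul_sum,
          smul_eq_mul, mul_left_comm] }
  -- α is injective
  have hαinj : Function.Injective α := by
    rw [← LinearMap.ker_eq_bot, Submodule.eq_bot_iff]
    intro lam hlam
    rw [LinearMap.mem_ker] at hlam
    have hz : ∀ j, ∑ i, (lam i : Polynomial K) * P i j = 0 := by
      intro j
      have := congrFun hlam j
      exact Subtype.ext_iff.mp this
    have := Fintype.linearIndependent_iff.mp hli (fun i => (lam i : Polynomial K))
      (by
        funext j
        simp only [Finset.sum_apply, Pi.smul_apply, smul_eq_mul, Pi.zero_apply]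
        exact hz j)
    funext i
    exact Subtype.ext (this i)
  -- ker β ⊆ range α
  have hker : LinearMap.ker β ≤ LinearMap.range α := by
    intro q hq
    rw [LinearMap.mem_ker] at hq
    have hint : IsInterpolant E M (fun c => (q c : Polynomial K)) := hq
    rw [hspan, Submodule.mem_span_range_iff_exists_fun] at hint
    obtain ⟨lam, hlam⟩ := hint
    have hlam' : ∀ j, ∑ i, lam i * P i j = (q j : Polynomial K) := by
      intro j
      have := congrFun hlam j
      simpa using this
    have hqdeg : ∀ j, (∑ i, lam i * P i j).degree + (s j : WithBot ℕ) ≤ (t : WithBot ℕ) := by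
      intro j
      rw [hlam' j]
      by_cases h0 : (q j : Polynomial K) = 0
      · rw [h0, degree_zero, WithBot.bot_add]
        exact bot_le
      have := (q j).2
      rw [mem_degreeLT, degree_eq_natDegree h0] at this
      rw [degree_eq_natDegree h0, ← Nat.cast_add]
      have hn : (q j : Polynomial K).natDegree < t + 1 - s j := by exact_mod_cast this
      have := hst j
      exact_mod_cast (by omega : (q j : Polynomial K).natDegree + s j ≤ t)
    have hpd := pred_deg s P hred d hd lam t hqdeg
    have hmemB : ∀ i, lam i ∈ degreeLT K (t + 1 - d i) := by
      intro i
      rw [mem_degreeLT]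
      by_cases h0 : lam i = 0
      · rw [h0, degree_zero]
        exact WithBot.bot_lt_coe _
      have := hpd i
      rw [degree_eq_natDegree h0, ← Nat.cast_add] at this
      have hn : (lam i).natDegree + d i ≤ t := by exact_mod_cast this
      rw [degree_eq_natDegree h0]
      have := hdt i
      exact_mod_cast (by omega : (lam i).natDegree < t + 1 - d i)
    refine ⟨fun i => ⟨lam i, hmemB i⟩, ?_⟩
    funext j
    exact Subtype.ext (hlam' j)
  -- dimension count
  have hfinA : Module.finrank K (Π j : Fin m, degreeLT K (t + 1 - s j)) =
      ∑ j, (t + 1 - s j) := by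
    rw [Module.finrank_pi_fintype]
    exact Finset.sum_congr rfl fun j _ => by
      rw [(Polynomial.degreeLTEquiv K _).finrank_eq]; simp
  have hfinB : Module.finrank K (Π i : Fin m, degreeLT K (t + 1 - d i)) =
      ∑ i, (t + 1 - d i) := by
    rw [Module.finrank_pi_fintype]
    exact Finset.sum_congr rfl fun i _ => by
      rw [(Polynomial.degreeLTEquiv K _).finrank_eq]; simp
  have hrn := LinearMap.finrank_range_add_finrank_ker β
  have hkerle : Module.finrank K (LinearMap.ker β) ≤ ∑ i, (t + 1 - d i) := by
    calc Module.finrank K (LinearMap.ker β)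
        ≤ Module.finrank K (LinearMap.range α) := Submodule.finrank_mono hker
      _ = ∑ i, (t + 1 - d i) := by rw [LinearMap.finrank_range_of_inj hαinj, hfinB]
  have hrgle : Module.finrank K (LinearMap.range β) ≤ σ := by
    calc Module.finrank K (LinearMap.range β) ≤ Module.finrank K (Fin σ → K) :=
          (LinearMap.range β).finrank_le
      _ = σ := by simp [Module.finrank_pi]
  have hineq : ∑ j, (t + 1 - s j) ≤ σ + ∑ i, (t + 1 - d i) := by
    rw [← hfinA, ← hrn]
    omega
  -- conclude
  have hsum1 : ∑ j, (t + 1 - s j) + ∑ j, s j = m * (t + 1) := by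
    rw [← Finset.sum_add_distrib]
    rw [Finset.sum_congr rfl (fun j _ => by
      have := hst j; omega : ∀ j ∈ Finset.univ, (t + 1 - s j) + s j = t + 1)]
    simp [Finset.sum_const, mul_comm]
  have hsum2 : ∑ i, (t + 1 - d i) + ∑ i, d i = m * (t + 1) := by
    rw [← Finset.sum_add_distrib]
    rw [Finset.sum_congr rfl (fun i _ => by
      have := hdt i; omega : ∀ i ∈ Finset.univ, (t + 1 - d i) + d i = t + 1)]
    simp [Finset.sum_const, mul_comm]
  have hfinal : ∑ i, d i ≤ σ + ∑ j, s j := by omega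
  calc ∑ i, rowDegW s P i = ∑ i, ((d i : ℕ) : WithBot ℕ) :=
        Finset.sum_congr rfl fun i _ => hd i
    _ = ((∑ i, d i : ℕ) : WithBot ℕ) := by push_cast; rfl
    _ ≤ ((σ + ∑ j, s j : ℕ) : WithBot ℕ) := by exact_mod_cast hfinal
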